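/- Let F : T → T' be an exact (triangulated) functor between triangulated categories such that the induced functor from the Verdier quotient T/Ker(F) to T' is full. If the essential image of F generates T' as a triangulated category (under shifts and cones), then F is essentially surjective. -/

import Mathlib

/-!
STATEMENT 1: If `F : T ⥤ T'` is an exact functor of triangulated categories such that
the induced functor `T/Ker(F) ⥤ T'` out of the Verdier quotient by the kernel of `F`
is full, and the essential image of `F` generates `T'` as a triangulated category,
then `F` is essentially surjective.
-/

open CategoryTheory Limits Pretriangulated

variable {T' : Type*} [Category T'] [HasZeroObject T'] [HasShift T' ℤ] [Preadditive T']
  [∀ n : ℤ, (CategoryTheory.shiftFunctor T' n).Additive] [Pretriangulated T']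

/-- The smallest class of objects containing `S` and closed under shifts and cones. -/
inductive TriangGen (S : Set T') : T' → Prop
  | of {X : T'} : X ∈ S → TriangGen S X
  | shift {X : T'} (n : ℤ) : TriangGen S X → TriangGen S (X⟦n⟧)
  | cone (Tr : Triangle T') : Tr ∈ (distTriang T') → TriangGen S Tr.obj₁ →
      TriangGen S Tr.obj₂ → TriangGen S Tr.obj₃

section Aux

variable {T : Type*} [Category T] [HasZeroObject T] [HasShift T ℤ] [Preadditive T]
    [∀ n : ℤ, (CategoryTheory.shiftFunctor T n).Additive] [Pretriangulated T]
    (F : T ⥤ T') [F.Additive] [F.CommShift ℤ] [F.IsTriangulated]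
    (K : ObjectProperty T) [K.IsTriangulated]

/-- A morphism lies in `K.W` iff `F` inverts it. -/
lemma kerW_iff_isIso (hK : ∀ X : T, K X ↔ IsZero (F.obj X))
    {X Y : T} (g : X ⟶ Y) : K.trW g ↔ IsIso (F.map g) := by
  constructor
  · rintro ⟨Z, a, b, H, mem⟩
    exact (Triangle.isZero₃_iff_isIso₁ _ (F.map_distinguished _ H)).1 ((hK Z).1 mem)
  · intro h
    obtain ⟨Z, a, b, H⟩ := distinguished_cocone_triangle g
    exact ⟨Z, a, b, H,
      (hK Z).2 ((Triangle.isZero₃_iff_isIso₁ _ (F.map_distinguished _ H)).2 h)⟩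

lemma kerW_isMultiplicative (hK : ∀ X : T, K X ↔ IsZero (F.obj X)) :
    K.trW.IsMultiplicative where
  comp_mem f g hf hg := by
    rw [kerW_iff_isIso F K hK] at hf hg ⊢
    rw [F.map_comp]
    exact IsIso.comp_isIso' hf hg

lemma kerW_hasLeftCalculusOfFractions (hK : ∀ X : T, K X ↔ IsZero (F.obj X)) :
    K.trW.HasLeftCalculusOfFractions := by
  haveI := kerW_isMultiplicative F K hK
  exact
  { exists_leftFraction := fun X Y φ => by
      obtain ⟨Z, f, g, H, mem⟩ := φ.hs
      obtain ⟨Y', s', f', mem'⟩ := distinguished_cocone_triangle₂ (g ≫ φ.f⟦1⟧')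
      obtain ⟨b, ⟨hb₁, _⟩⟩ :=
        complete_distinguished_triangle_morphism₂ _ _ H mem' φ.f (𝟙 Z) (Category.id_comp _).symm
      exact ⟨MorphismProperty.LeftFraction.mk b s' ⟨_, _, _, mem', mem⟩, hb₁.symm⟩
    ext := by
      rintro X' X Y f₁ f₂ s ⟨Z, g, h, H, mem⟩ hf₁
      have hf₂ : s ≫ (f₁ - f₂) = 0 := by rw [Preadditive.comp_sub, hf₁, sub_self]
      obtain ⟨q, hq⟩ := Triangle.yoneda_exact₂ _ H _ hf₂
      obtain ⟨Y', r, t, mem'⟩ := distinguished_cocone_triangle q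
      refine ⟨Y', r, ?_, ?_⟩
      · exact ⟨_, _, _, rot_of_distTriang _ mem', K.le_shift _ _ mem⟩
      · have eq := comp_distTriang_mor_zero₁₂ _ mem'
        change f₁ - f₂ = g ≫ q at hq
        change q ≫ r = 0 at eq
        rw [← sub_eq_zero, ← Preadditive.sub_comp, hq]
        exact (Category.assoc g q r).trans ((congrArg (fun x => g ≫ x) eq).trans
          Limits.comp_zero) }

end Aux

theorem essSurj_of_full_on_quotient_of_generates
    {T : Type*} [Category T] [HasZeroObject T] [HasShift T ℤ] [Preadditive T]
    [∀ n : ℤ, (CategoryTheory.shiftFunctor T n).Additive] [Pretriangulated T]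
    (F : T ⥤ T') [F.Additive] [F.CommShift ℤ] [F.IsTriangulated]
    -- `K` is the kernel of `F`, as a triangulated subcategory of `T`
    (K : ObjectProperty T) [K.IsTriangulated] (hK : ∀ X : T, K X ↔ IsZero (F.obj X))
    -- the Verdier quotient `T/Ker F`, presented as a localization `L : T ⥤ D`
    -- with respect to the class `K.W` of morphisms whose cone lies in `K`
    {D : Type*} [Category D] (L : T ⥤ D) [L.IsLocalization K.trW]
    -- the induced functor `F' : T/Ker F ⥤ T'`, which is assumed to be full
    (F' : D ⥤ T') (e : L ⋙ F' ≅ F) (hfull : F'.Full)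
    -- the essential image of `F` generates `T'` as a triangulated category
    (hgen : ∀ Y : T', TriangGen F.essImage Y) :
    F.EssSurj := by
  haveI := hfull
  haveI := kerW_hasLeftCalculusOfFractions F K hK
  suffices key : ∀ Y : T', TriangGen F.essImage Y → F.essImage Y by
    exact ⟨fun Y => key Y (hgen Y)⟩
  intro Y hY
  induction hY with
  | of h => exact h
  | shift n _ ih =>
      obtain ⟨X, ⟨eX⟩⟩ := ih
      exact ⟨X⟦n⟧, ⟨(F.commShiftIso n).app X ≪≫ (shiftFunctor T' n).mapIso eX⟩⟩
  | cone Tr hTr _ _ ih₁ ih₂ =>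
      obtain ⟨X₁, ⟨e₁⟩⟩ := ih₁
      obtain ⟨X₂, ⟨e₂⟩⟩ := ih₂
      -- the morphism `f : F.obj X₁ ⟶ F.obj X₂` corresponding to `Tr.mor₁`
      set f : F.obj X₁ ⟶ F.obj X₂ := e₁.hom ≫ Tr.mor₁ ≫ e₂.inv with hf
      -- lift it to the Verdier quotient using fullness of `F'`
      obtain ⟨φ, hφ⟩ := F'.map_surjective (e.hom.app X₁ ≫ f ≫ e.inv.app X₂)
      -- write `φ` as a left fraction
      obtain ⟨ψ, hψ⟩ := Localization.exists_leftFraction L K.trW φ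
      have hs : IsIso (F.map ψ.s) := (kerW_iff_isIso F K hK ψ.s).1 ψ.hs
      -- key identity : `f ≫ F.map ψ.s = F.map ψ.f`
      have key : f ≫ F.map ψ.s = F.map ψ.f := by
        have h1 : F'.map φ ≫ F'.map (L.map ψ.s) = F'.map (L.map ψ.f) := by
          rw [← F'.map_comp, hψ]
          congr 1
          exact ψ.map_comp_map_s L (Localization.inverts L K.trW)
        rw [hφ] at h1
        have h3 := e.inv.app X₁ ≫= (h1 =≫ e.hom.app ψ.Y')
        have A : f ≫ e.inv.app X₂ ≫ F'.map (L.map ψ.s) ≫ e.hom.app ψ.Y'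
            = e.inv.app X₁ ≫ F'.map (L.map ψ.f) ≫ e.hom.app ψ.Y' := by
          simpa using h3
        have B : e.inv.app X₂ ≫ F'.map (L.map ψ.s) ≫ e.hom.app ψ.Y' = F.map ψ.s := by
          have h := e.hom.naturality ψ.s
          dsimp at h
          rw [h]
          simp
        have C : e.inv.app X₁ ≫ F'.map (L.map ψ.f) ≫ e.hom.app ψ.Y' = F.map ψ.f := by
          have h := e.hom.naturality ψ.f
          dsimp at h
          rw [h]
          simp
        calc f ≫ F.map ψ.s
            = f ≫ e.inv.app X₂ ≫ F'.map (L.map ψ.s) ≫ e.hom.app ψ.Y' := by rw [B]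
          _ = e.inv.app X₁ ≫ F'.map (L.map ψ.f) ≫ e.hom.app ψ.Y' := A
          _ = F.map ψ.f := C
      -- complete `ψ.f` to a distinguished triangle in `T`
      obtain ⟨Z, g', h', mem⟩ := distinguished_cocone_triangle ψ.f
      -- compare `F` of this triangle with `Tr`
      have hFT := F.map_distinguished _ mem
      let iso := isoTriangleOfIso₁₂ _ Tr hFT hTr e₁ ((asIso (F.map ψ.s)).symm ≪≫ e₂) (by
        change F.map ψ.f ≫ inv (F.map ψ.s) ≫ e₂.hom = e₁.hom ≫ Tr.mor₁
        rw [← key]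
        simp [hf])
      exact ⟨Z, ⟨Triangle.π₃.mapIso iso⟩⟩
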